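/- Let y₀ ∈ (0, π). For every u ∈ H^1(0, π) with u(y₀) = 0, one has ∫₀^π |u(y)|² sin² y /(y − y₀)² dy ≤ c₁₃ ∫₀^π |u'(y)|² sin² y dy, where c₁₃ = 4π²/(π² − max{y₀², (π − y₀)²}). -/

import Mathlib

open MeasureTheory Real
open Set Filter Topology

lemma exists_bound_of_tendsto (a b : ℝ) (hab : a < b) (g : ℝ → ℝ)
    (hg : ContinuousOn g (Ioo a b)) (la lb : ℝ)
    (ha : Tendsto g (𝓝[>] a) (𝓝 la)) (hb : Tendsto g (𝓝[<] b) (𝓝 lb)) :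
    ∃ C, ∀ y ∈ Ioo a b, |g y| ≤ C := by
  set G : ℝ → ℝ := Function.update (Function.update g a la) b lb with hG
  have hGg : ∀ y ∈ Ioo a b, G y = g y := by
    intro y hy
    rw [hG, Function.update_of_ne hy.2.ne, Function.update_of_ne hy.1.ne']
  have hcont : ContinuousOn G (Icc a b) := by
    rw [hG, continuousOn_update_iff, continuousOn_update_iff, Icc_sdiff_right, Ico_sdiff_left]
    refine ⟨⟨hg, ?_⟩, ?_⟩
    · intro _
      exact ha.mono_left (nhdsWithin_mono _ Ioo_subset_Ioi_self)
    · intro _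
      refine (hb.congr' ?_).mono_left (nhdsWithin_mono _ Ico_subset_Iio_self)
      filter_upwards [Ioo_mem_nhdsLT_of_mem (right_mem_Ioc.2 hab)] with z hz
      exact (Function.update_of_ne hz.1.ne' la g).symm
  obtain ⟨C, hC⟩ := (isCompact_Icc).exists_bound_of_continuousOn hcont
  exact ⟨C, fun y hy => by rw [← Real.norm_eq_abs, ← hGg y hy]; exact hC y (Ioo_subset_Icc_self hy)⟩

lemma hardy_left (a b : ℝ) (hab : a < b) (v v' : ℝ → ℝ)
    (hv : ∀ y ∈ Icc a b, HasDerivAt v (v' y) y)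
    (hva : v a = 0)
    (hv' : IntegrableOn (fun y => v' y ^ 2) (Ioo a b)) :
    IntegrableOn (fun y => v y ^ 2 / (y - a) ^ 2) (Ioo a b) ∧
      ∫ y in Ioo a b, v y ^ 2 / (y - a) ^ 2 ≤ 4 * ∫ y in Ioo a b, v' y ^ 2 := by
  have haI : a ∈ Icc a b := left_mem_Icc.2 hab.le
  have hbI : b ∈ Icc a b := right_mem_Icc.2 hab.le
  have hvc : ContinuousOn v (Icc a b) := fun y hy => ((hv y hy).continuousAt).continuousWithinAt
  set q : ℝ → ℝ := fun y => v y / (y - a) with hqdef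
  have hsub : ∀ y ∈ Ioo a b, y - a ≠ 0 := fun y hy => sub_ne_zero.2 hy.1.ne'
  have hq_cont : ContinuousOn q (Ioo a b) :=
    (hvc.mono Ioo_subset_Icc_self).div
      ((continuous_id.sub continuous_const).continuousOn) hsub
  have hqa : Tendsto q (𝓝[>] a) (𝓝 (v' a)) := by
    have h1 := hasDerivAt_iff_tendsto_slope.mp (hv a haI)
    have h2 : Tendsto q (𝓝[≠] a) (𝓝 (v' a)) := by
      refine h1.congr fun y => ?_
      rw [slope_def_field, hva, sub_zero]
    exact h2.mono_left (nhdsWithin_mono _ fun y hy => hy.ne')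
  have hqb : Tendsto q (𝓝[<] b) (𝓝 (q b)) := by
    have : ContinuousAt q b :=
      ((hv b hbI).continuousAt).div ((continuous_id.sub continuous_const).continuousAt)
        (sub_ne_zero.2 hab.ne')
    exact this.tendsto.mono_left nhdsWithin_le_nhds
  obtain ⟨C, hC⟩ := exists_bound_of_tendsto a b hab q hq_cont _ _ hqa hqb
  set f : ℝ → ℝ := fun y => v y ^ 2 / (y - a) ^ 2 with hfdef
  have hfq : ∀ y ∈ Ioo a b, f y = q y ^ 2 := by
    intro y hy
    rw [hfdef, hqdef]; simp [div_pow]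
  -- integrability of f
  have hf_meas : AEStronglyMeasurable f (volume.restrict (Ioo a b)) := by
    refine ContinuousOn.aestronglyMeasurable ?_ measurableSet_Ioo
    exact ((hvc.mono Ioo_subset_Icc_self).pow 2).div
      (((continuous_id.sub continuous_const).pow 2).continuousOn)
      (fun y hy => pow_ne_zero 2 (hsub y hy))
  have hconst : IntegrableOn (fun _ : ℝ => C ^ 2) (Ioo a b) :=
    integrableOn_const measure_Ioo_lt_top.ne
  have hf_int : IntegrableOn f (Ioo a b) := by
    refine Integrable.mono' hconst hf_meas ?_
    refine (ae_restrict_iff' measurableSet_Ioo).2 (ae_of_all _ fun y hy => ?_)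
    rw [Real.norm_eq_abs, hfq y hy, abs_of_nonneg (sq_nonneg _), ← sq_abs]
    exact pow_le_pow_left₀ (abs_nonneg _) (hC y hy) 2
  -- integrability of the cross term
  have hv'm : AEStronglyMeasurable v' (volume.restrict (Ioo a b)) := by
    refine ((measurable_deriv v).aestronglyMeasurable).congr ?_
    refine (ae_restrict_iff' measurableSet_Ioo).2 (ae_of_all _ fun y hy => ?_)
    exact ((hv y (Ioo_subset_Icc_self hy)).deriv)
  have hI2 : IntegrableOn (fun y => 2 * q y * v' y) (Ioo a b) := by
    refine Integrable.mono' (hconst.add hv') ?_ ?_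
    · exact ((aestronglyMeasurable_const.mul
        (hq_cont.aestronglyMeasurable measurableSet_Ioo))).mul hv'm
    · refine (ae_restrict_iff' measurableSet_Ioo).2 (ae_of_all _ fun y hy => ?_)
      have h1 : |q y| ≤ C := hC y hy
      have goal2 : |2 * q y * v' y| ≤ C ^ 2 + v' y ^ 2 := by
        have h2 : |2 * q y * v' y| = 2 * |q y| * |v' y| := by
          rw [abs_mul, abs_mul]; simp
        nlinarith [sq_nonneg (|q y| - |v' y|), abs_nonneg (q y), abs_nonneg (v' y),
          sq_abs (v' y), sq_abs (q y)]
      calc ‖2 * q y * v' y‖ = |2 * q y * v' y| := Real.norm_eq_abs _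
        _ ≤ C ^ 2 + v' y ^ 2 := goal2
  -- FTC part
  set H : ℝ → ℝ := fun y => -(v y ^ 2 / (y - a)) with hHdef
  have Hd : ∀ y ∈ Ioo a b, HasDerivAt H (f y - 2 * q y * v' y) y := by
    intro y hy
    have h1 : HasDerivAt (fun y => v y ^ 2) (2 * v y * v' y) y := by
      have := (hv y (Ioo_subset_Icc_self hy)).fun_pow 2
      simpa [mul_comm, mul_assoc, mul_left_comm] using this
    have h2 : HasDerivAt (fun y => y - a) 1 y := (hasDerivAt_id y).sub_const a
    have h3 := (h1.fun_div h2 (hsub y hy)).fun_neg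
    refine h3.congr_deriv (Eq.symm ?_)
    have hne := hsub y hy
    rw [hfdef, hqdef]
    field_simp
    ring
  have hGint : IntegrableOn (fun y => f y - 2 * q y * v' y) (Ioo a b) := hf_int.sub hI2
  have hGint' : IntervalIntegrable (fun y => f y - 2 * q y * v' y) volume a b :=
    (intervalIntegrable_iff_integrableOn_Ioo_of_le hab.le).2 hGint
  have hHa : Tendsto H (𝓝[>] a) (𝓝 0) := by
    have h1 : Tendsto (fun y => -((y - a) * q y ^ 2)) (𝓝[>] a) (𝓝 (-(0 * v' a ^ 2))) := by
      refine Tendsto.neg (Tendsto.mul ?_ (hqa.pow 2))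
      have : Tendsto (fun y : ℝ => y - a) (𝓝 a) (𝓝 0) := by
        have := (continuous_id.sub (continuous_const (y := a))).tendsto a
        simpa [Pi.sub_def] using this
      exact this.mono_left nhdsWithin_le_nhds
    rw [zero_mul, neg_zero] at h1
    refine h1.congr' ?_
    filter_upwards [self_mem_nhdsWithin] with y hy
    have hne : y - a ≠ 0 := sub_ne_zero.2 (ne_of_gt hy)
    rw [hHdef, hqdef]
    field_simp
  have hHb : Tendsto H (𝓝[<] b) (𝓝 (-(v b ^ 2 / (b - a)))) := by
    have : ContinuousAt H b :=
      (((hv b hbI).continuousAt.pow 2).div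
        ((continuous_id.sub continuous_const).continuousAt) (sub_ne_zero.2 hab.ne')).neg
    exact this.tendsto.mono_left nhdsWithin_le_nhds
  have key := intervalIntegral.integral_eq_sub_of_hasDerivAt_of_tendsto hab Hd hGint' hHa hHb
  rw [intervalIntegral.integral_of_le hab.le, integral_Ioc_eq_integral_Ioo,
    integral_sub hf_int hI2] at key
  have hb0 : 0 ≤ v b ^ 2 / (b - a) := div_nonneg (sq_nonneg _) (by linarith)
  have hmono : ∫ y in Ioo a b, 2 * q y * v' y
      ≤ ∫ y in Ioo a b, (f y / 2 + 2 * v' y ^ 2) := by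
    refine setIntegral_mono_on hI2
      ((hf_int.div_const 2).add (hv'.const_mul 2)) measurableSet_Ioo ?_
    intro y hy
    have hq2 := hfq y hy
    nlinarith [sq_nonneg (q y - 2 * v' y)]
  rw [integral_add (hf_int.div_const 2) (hv'.const_mul 2), integral_div,
    integral_const_mul] at hmono
  exact ⟨hf_int, by linarith [key, hmono]⟩

lemma hardy_right (a b : ℝ) (hab : a < b) (v v' : ℝ → ℝ)
    (hv : ∀ y ∈ Icc a b, HasDerivAt v (v' y) y)
    (hvb : v b = 0)
    (hv' : IntegrableOn (fun y => v' y ^ 2) (Ioo a b)) :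
    IntegrableOn (fun y => v y ^ 2 / (y - b) ^ 2) (Ioo a b) ∧
      ∫ y in Ioo a b, v y ^ 2 / (y - b) ^ 2 ≤ 4 * ∫ y in Ioo a b, v' y ^ 2 := by
  set c : ℝ := a + b with hc
  have hca : c - b = a := by ring
  have hcb : c - a = b := by ring
  -- transfer of integrability and integrals under reflection
  have keyInt : ∀ g : ℝ → ℝ, IntegrableOn g (Ioo a b) →
      IntegrableOn (fun y => g (c - y)) (Ioo a b) := by
    intro g hg
    have h1 : IntervalIntegrable g volume a b :=
      (intervalIntegrable_iff_integrableOn_Ioo_of_le hab.le).2 hg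
    have h2 := h1.comp_sub_left c
    rw [hca, hcb] at h2
    exact (intervalIntegrable_iff_integrableOn_Ioo_of_le hab.le).1 h2.symm
  have keyEq : ∀ g : ℝ → ℝ, (∫ y in Ioo a b, g (c - y)) = ∫ y in Ioo a b, g y := by
    intro g
    rw [← integral_Ioc_eq_integral_Ioo, ← intervalIntegral.integral_of_le hab.le,
      intervalIntegral.integral_comp_sub_left g c, hca, hcb,
      intervalIntegral.integral_of_le hab.le, integral_Ioc_eq_integral_Ioo]
  set w : ℝ → ℝ := fun y => v (c - y) with hw_def
  set w' : ℝ → ℝ := fun y => -v' (c - y) with hw'_def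
  have hw : ∀ y ∈ Icc a b, HasDerivAt w (w' y) y := by
    intro y hy
    have h1 : HasDerivAt (fun y : ℝ => c - y) (-1) y := (hasDerivAt_id y).const_sub c
    have h2 : c - y ∈ Icc a b := by
      constructor
      · simp only [hc]; linarith [hy.2]
      · simp only [hc]; linarith [hy.1]
    have h3 := (hv _ h2).comp y h1
    simpa [hw_def, hw'_def, mul_comm, Function.comp_def] using h3
  have hwa : w a = 0 := by
    rw [hw_def]; simp only [hcb]; exact hvb
  have hw'int : IntegrableOn (fun y => w' y ^ 2) (Ioo a b) := by
    have := keyInt (fun y => v' y ^ 2) hv'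
    refine this.congr_fun (fun y _ => ?_) measurableSet_Ioo
    simp [hw'_def]
  obtain ⟨hint, hineq⟩ := hardy_left a b hab w w' hw hwa hw'int
  have e : ∀ y : ℝ, w (c - y) ^ 2 / ((c - y) - a) ^ 2 = v y ^ 2 / (y - b) ^ 2 := by
    intro y
    rw [hw_def]
    simp only [sub_sub_cancel]
    congr 1
    ring
  have e2 : ∀ y : ℝ, w' y ^ 2 = v' (c - y) ^ 2 := by
    intro y; rw [hw'_def]; simp
  constructor
  · exact (keyInt (fun y => w y ^ 2 / (y - a) ^ 2) hint).congr_fun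
      (fun y _ => e y) measurableSet_Ioo
  · have r1 : (fun y => v y ^ 2 / (y - b) ^ 2)
        = fun y => w (c - y) ^ 2 / ((c - y) - a) ^ 2 := funext fun y => (e y).symm
    have r2 : (fun y => w' y ^ 2) = fun y => v' (c - y) ^ 2 := funext e2
    calc ∫ y in Ioo a b, v y ^ 2 / (y - b) ^ 2
        = ∫ y in Ioo a b, w (c - y) ^ 2 / ((c - y) - a) ^ 2 := by rw [r1]
      _ = ∫ y in Ioo a b, w y ^ 2 / (y - a) ^ 2 := keyEq (fun t => w t ^ 2 / (t - a) ^ 2)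
      _ ≤ 4 * ∫ y in Ioo a b, w' y ^ 2 := hineq
      _ = 4 * ∫ y in Ioo a b, v' (c - y) ^ 2 := by rw [r2]
      _ = 4 * ∫ y in Ioo a b, v' y ^ 2 := by rw [keyEq (fun y => v' y ^ 2)]

set_option maxHeartbeats 2000000 in
lemma poincare (a b : ℝ) (hab : a < b) (v v' : ℝ → ℝ)
    (hv : ∀ y ∈ Icc a b, HasDerivAt v (v' y) y)
    (hva : v a = 0) (hvb : v b = 0)
    (hv' : IntegrableOn (fun y => v' y ^ 2) (Ioo a b)) :
    ∫ y in Ioo a b, v y ^ 2 ≤ ((b - a) / π) ^ 2 * ∫ y in Ioo a b, v' y ^ 2 := by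
  have hba : (0 : ℝ) < b - a := by linarith
  set k : ℝ := π / (b - a) with hk
  have hkpos : 0 < k := div_pos pi_pos hba
  have hkba : k * (b - a) = π := div_mul_cancel₀ π hba.ne'
  set S : ℝ → ℝ := fun y => sin (k * (y - a)) with hS
  have hSa : S a = 0 := by
    show sin (k * (a - a)) = 0
    simp
  have hSb : S b = 0 := by
    show sin (k * (b - a)) = 0
    rw [hkba]; exact sin_pi
  have hSd : ∀ y : ℝ, HasDerivAt S (cos (k * (y - a)) * k) y := by
    intro y
    have h1 : HasDerivAt (fun y : ℝ => k * (y - a)) k y := by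
      simpa using ((hasDerivAt_id y).sub_const a).const_mul k
    exact (hasDerivAt_sin (k * (y - a))).comp y h1
  have hSpos : ∀ y ∈ Ioo a b, 0 < S y := by
    intro y hy
    refine sin_pos_of_pos_of_lt_pi (mul_pos hkpos (by linarith [hy.1])) ?_
    rw [← hkba]
    exact (mul_lt_mul_iff_right₀ hkpos).2 (by linarith [hy.2])
  have hvc : ContinuousOn v (Icc a b) := fun y hy => ((hv y hy).continuousAt).continuousWithinAt
  set r : ℝ → ℝ := fun y => v y / S y with hr
  have hr_cont : ContinuousOn r (Ioo a b) := by
    refine (hvc.mono Ioo_subset_Icc_self).div ?_ (fun y hy => (hSpos y hy).ne')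
    exact Continuous.continuousOn (by continuity)
  -- limit of r at a
  have hslope : ∀ c ∈ Icc a b, v c = 0 → S c = 0 →
      Tendsto r (𝓝[≠] c) (𝓝 (v' c / (cos (k * (c - a)) * k))) := by
    intro c hc hvc0 hSc0
    have h1 : Tendsto (slope v c) (𝓝[≠] c) (𝓝 (v' c)) :=
      hasDerivAt_iff_tendsto_slope.mp (hv c hc)
    have h2 : Tendsto (slope S c) (𝓝[≠] c) (𝓝 (cos (k * (c - a)) * k)) :=
      hasDerivAt_iff_tendsto_slope.mp (hSd c)
    have hcos : cos (k * (c - a)) * k ≠ 0 := by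
      have h0 : sin (k * (c - a)) = 0 := hSc0
      have hpy := sin_sq_add_cos_sq (k * (c - a))
      rw [h0] at hpy
      refine mul_ne_zero (fun h => ?_) hkpos.ne'
      rw [h] at hpy
      norm_num at hpy
    have h3 := h1.div h2 hcos
    refine h3.congr' ?_
    filter_upwards [self_mem_nhdsWithin] with y hy
    simp only [Pi.div_apply]
    rw [slope_def_field, slope_def_field, hvc0, hSc0, sub_zero, sub_zero, hr]
    have hyc : y - c ≠ 0 := sub_ne_zero.2 hy
    by_cases hSy : S y = 0
    · simp [hSy]
    · field_simp
  have hra : Tendsto r (𝓝[>] a) (𝓝 (v' a / (cos (k * (a - a)) * k))) :=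
    (hslope a (left_mem_Icc.2 hab.le) hva hSa).mono_left
      (nhdsWithin_mono _ fun y hy => ne_of_gt hy)
  have hrb : Tendsto r (𝓝[<] b) (𝓝 (v' b / (cos (k * (b - a)) * k))) :=
    (hslope b (right_mem_Icc.2 hab.le) hvb hSb).mono_left
      (nhdsWithin_mono _ fun y hy => ne_of_lt hy)
  obtain ⟨Cr, hCr⟩ := exists_bound_of_tendsto a b hab r hr_cont _ _ hra hrb
  have hCr0 : 0 ≤ Cr :=
    le_trans (abs_nonneg _) (hCr ((a + b) / 2) ⟨by linarith, by linarith⟩)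
  obtain ⟨Cv, hCv⟩ := isCompact_Icc.exists_bound_of_continuousOn hvc
  have hconst : ∀ c : ℝ, IntegrableOn (fun _ : ℝ => c) (Ioo a b) := fun c =>
    integrableOn_const measure_Ioo_lt_top.ne
  have hv2int : IntegrableOn (fun y => v y ^ 2) (Ioo a b) := by
    refine Integrable.mono' (hconst (Cv ^ 2))
      (((hvc.mono Ioo_subset_Icc_self).pow 2).aestronglyMeasurable measurableSet_Ioo) ?_
    refine (ae_restrict_iff' measurableSet_Ioo).2 (ae_of_all _ fun y hy => ?_)
    have := hCv y (Ioo_subset_Icc_self hy)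
    rw [Real.norm_eq_abs, abs_of_nonneg (sq_nonneg _), ← sq_abs]
    exact pow_le_pow_left₀ (abs_nonneg _) (by rwa [Real.norm_eq_abs] at this) 2
  have hv'm : AEStronglyMeasurable v' (volume.restrict (Ioo a b)) := by
    refine ((measurable_deriv v).aestronglyMeasurable).congr ?_
    refine (ae_restrict_iff' measurableSet_Ioo).2 (ae_of_all _ fun y hy => ?_)
    exact ((hv y (Ioo_subset_Icc_self hy)).deriv)
  set D : ℝ → ℝ := fun y =>
    k * (2 * v y * v' y * (cos (k * (y - a)) / S y) + v y ^ 2 * (-(k / S y ^ 2))) with hD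
  set H : ℝ → ℝ := fun y => k * (v y ^ 2 * (cos (k * (y - a)) / S y)) with hHdef
  have hcos_cont : Continuous (fun y : ℝ => cos (k * (y - a))) :=
    Real.continuous_cos.comp (continuous_const.mul (continuous_id.sub continuous_const))
  have hDd : ∀ y ∈ Ioo a b, HasDerivAt H (D y) y := by
    intro y hy
    have hSy : S y ≠ 0 := (hSpos y hy).ne'
    have h1 : HasDerivAt (fun y => v y ^ 2) (2 * v y * v' y) y := by
      have := (hv y (Ioo_subset_Icc_self hy)).fun_pow 2
      simpa [mul_comm, mul_assoc, mul_left_comm] using this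
    have hinner : HasDerivAt (fun y : ℝ => k * (y - a)) k y := by
      simpa using ((hasDerivAt_id y).sub_const a).const_mul k
    have hcosd : HasDerivAt (fun y => cos (k * (y - a))) (-sin (k * (y - a)) * k) y :=
      hinner.cos
    have hq : HasDerivAt (fun y => cos (k * (y - a)) / S y) (-(k / S y ^ 2)) y := by
      have h2 := hcosd.fun_div (hSd y) hSy
      refine h2.congr_deriv (Eq.symm ?_)
      have hpy := sin_sq_add_cos_sq (k * (y - a))
      have hSy' : S y = sin (k * (y - a)) := rfl
      rw [hSy']
      rw [hSy'] at hSy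
      field_simp
      linear_combination hpy
    exact ((h1.fun_mul hq).const_mul k)
  have eD : ∀ y ∈ Ioo a b, D y
      = k * (2 * (r y * cos (k * (y - a))) * v' y - k * r y ^ 2) := by
    intro y hy
    have hSy : S y ≠ 0 := (hSpos y hy).ne'
    rw [hD, hr]
    ring
  have hDint : IntegrableOn D (Ioo a b) := by
    refine Integrable.mono'
      ((hconst (k * (Cr + k * Cr ^ 2))).add ((hv'.const_mul (k * Cr)))) ?_ ?_
    · refine (AEStronglyMeasurable.mul aestronglyMeasurable_const ?_)
      refine AEStronglyMeasurable.add ?_ ?_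
      · refine AEStronglyMeasurable.mul ?_ ?_
        · exact (aestronglyMeasurable_const.mul
            ((hvc.mono Ioo_subset_Icc_self).aestronglyMeasurable measurableSet_Ioo)).mul hv'm
        · exact (hcos_cont.continuousOn.div
            ((continuous_sin.comp (continuous_const.mul (continuous_id.sub continuous_const))).continuousOn)
            (fun y hy => (hSpos y hy).ne')).aestronglyMeasurable measurableSet_Ioo
      · refine AEStronglyMeasurable.mul
          (((hvc.mono Ioo_subset_Icc_self).pow 2).aestronglyMeasurable measurableSet_Ioo) ?_
        exact ((continuousOn_const.div
          (((continuous_sin.comp (continuous_const.mul (continuous_id.sub continuous_const))).pow 2).continuousOn)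
          (fun y hy => pow_ne_zero 2 (hSpos y hy).ne')).neg).aestronglyMeasurable
          measurableSet_Ioo
    · refine (ae_restrict_iff' measurableSet_Ioo).2 (ae_of_all _ fun y hy => ?_)
      have hry : |r y| ≤ Cr := hCr y hy
      have hcy : |cos (k * (y - a))| ≤ 1 := abs_cos_le_one _
      have h2 : |D y| ≤ k * (2 * Cr * |v' y| + k * Cr ^ 2) := by
        rw [eD y hy, abs_mul, abs_of_pos hkpos]
        refine mul_le_mul_of_nonneg_left ?_ hkpos.le
        refine (abs_sub _ _).trans ?_
        have e1 : |2 * (r y * cos (k * (y - a))) * v' y|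
            = 2 * (|r y| * |cos (k * (y - a))|) * |v' y| := by
          rw [abs_mul, abs_mul, abs_mul]; simp
        have e2 : |k * r y ^ 2| = k * r y ^ 2 := by
          rw [abs_mul, abs_of_pos hkpos, abs_of_nonneg (sq_nonneg _)]
        rw [e1, e2]
        have hr2 : r y ^ 2 ≤ Cr ^ 2 := by
          rw [← sq_abs]; exact pow_le_pow_left₀ (abs_nonneg _) hry 2
        have : |r y| * |cos (k * (y - a))| ≤ Cr := by
          calc |r y| * |cos (k * (y - a))| ≤ Cr * 1 :=
            mul_le_mul hry hcy (abs_nonneg _) hCr0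
          _ = Cr := mul_one Cr
        nlinarith [abs_nonneg (v' y), mul_le_mul_of_nonneg_right this (abs_nonneg (v' y))]
      simp only [Pi.add_apply]
      rw [Real.norm_eq_abs]
      refine h2.trans ?_
      have h3 : 2 * |v' y| ≤ 1 + v' y ^ 2 := by nlinarith [sq_nonneg (|v' y| - 1), sq_abs (v' y)]
      have h5 : 2 * Cr * |v' y| ≤ Cr * (1 + v' y ^ 2) := by nlinarith
      have h4 := mul_le_mul_of_nonneg_left h5 hkpos.le
      nlinarith [h4]
  have hDint' : IntervalIntegrable D volume a b :=
    (intervalIntegrable_iff_integrableOn_Ioo_of_le hab.le).2 hDint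
  have eH : ∀ y : ℝ, H y = k * (v y * (r y * cos (k * (y - a)))) := by
    intro y; rw [hHdef, hr]; ring
  have hva_t : Tendsto v (𝓝 a) (𝓝 0) := by
    have := (hv a (left_mem_Icc.2 hab.le)).continuousAt.tendsto
    rwa [hva] at this
  have hvb_t : Tendsto v (𝓝 b) (𝓝 0) := by
    have := (hv b (right_mem_Icc.2 hab.le)).continuousAt.tendsto
    rwa [hvb] at this
  have hHa : Tendsto H (𝓝[>] a) (𝓝 0) := by
    have h1 := ((hva_t.mono_left nhdsWithin_le_nhds).mul
      (hra.mul ((hcos_cont.tendsto a).mono_left nhdsWithin_le_nhds))).const_mul k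
    rw [zero_mul, mul_zero] at h1
    exact Tendsto.congr (fun y => (eH y).symm) h1
  have hHb : Tendsto H (𝓝[<] b) (𝓝 0) := by
    have h1 := ((hvb_t.mono_left nhdsWithin_le_nhds).mul
      (hrb.mul ((hcos_cont.tendsto b).mono_left nhdsWithin_le_nhds))).const_mul k
    rw [zero_mul, mul_zero] at h1
    exact Tendsto.congr (fun y => (eH y).symm) h1
  have hFTC := intervalIntegral.integral_eq_sub_of_hasDerivAt_of_tendsto hab hDd hDint' hHa hHb
  rw [intervalIntegral.integral_of_le hab.le, integral_Ioc_eq_integral_Ioo, sub_zero] at hFTC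
  -- pointwise inequality
  have key : ∀ y ∈ Ioo a b, k ^ 2 * v y ^ 2 ≤ v' y ^ 2 - D y := by
    intro y hy
    have hSy : S y ≠ 0 := (hSpos y hy).ne'
    have hpy : S y ^ 2 + cos (k * (y - a)) ^ 2 = 1 := sin_sq_add_cos_sq (k * (y - a))
    have e : (v' y ^ 2 - D y - k ^ 2 * v y ^ 2) * S y ^ 2
        = (v' y * S y - k * v y * cos (k * (y - a))) ^ 2 := by
      rw [hD]
      field_simp
      linear_combination (-(π * (b - a)⁻¹) ^ 2 * v y ^ 2) * hpy
    nlinarith [sq_nonneg (v' y * S y - k * v y * cos (k * (y - a))), sq_nonneg (S y),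
      pow_pos (hSpos y hy) 2]
  have hmono : ∫ y in Ioo a b, k ^ 2 * v y ^ 2 ≤ ∫ y in Ioo a b, (v' y ^ 2 - D y) :=
    setIntegral_mono_on (hv2int.const_mul _) (hv'.sub hDint) measurableSet_Ioo key
  rw [integral_sub hv' hDint, hFTC, sub_zero, integral_const_mul] at hmono
  have hk2 : 0 < k ^ 2 := pow_pos hkpos 2
  have hfinal : ((b - a) / π) ^ 2 = (k ^ 2)⁻¹ := by
    rw [hk]
    field_simp
  rw [hfinal, ← div_eq_inv_mul, le_div_iff₀ hk2]
  linarith [hmono]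

set_option maxHeartbeats 2000000 in
lemma real_main (y₀ : ℝ) (hy₀ : y₀ ∈ Ioo 0 π) (w w' : ℝ → ℝ)
    (hw : ∀ y ∈ Icc 0 π, HasDerivAt w (w' y) y)
    (hint : IntegrableOn (fun y => w' y ^ 2 * sin y ^ 2) (Ioo 0 π))
    (h0 : w y₀ = 0) :
    IntegrableOn (fun y => w y ^ 2 * sin y ^ 2 / (y - y₀) ^ 2) (Ioo 0 π) ∧
      ∫ y in Ioo 0 π, w y ^ 2 * sin y ^ 2 / (y - y₀) ^ 2
        ≤ (4 * π ^ 2 / (π ^ 2 - max (y₀ ^ 2) ((π - y₀) ^ 2))) *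
          ∫ y in Ioo 0 π, w' y ^ 2 * sin y ^ 2 := by
  obtain ⟨hy₀0, hy₀π⟩ := hy₀
  set M : ℝ := max (y₀ ^ 2) ((π - y₀) ^ 2) with hM
  set v : ℝ → ℝ := fun y => w y * sin y with hv_def
  set v' : ℝ → ℝ := fun y => w' y * sin y + w y * cos y with hv'_def
  have hv : ∀ y ∈ Icc 0 π, HasDerivAt v (v' y) y := fun y hy =>
    (hw y hy).mul (hasDerivAt_sin y)
  have hvy₀ : v y₀ = 0 := by rw [hv_def]; simp [h0]
  have hw_cont : ContinuousOn w (Icc 0 π) := fun y hy =>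
    ((hw y hy).continuousAt).continuousWithinAt
  obtain ⟨Cw, hCw⟩ := isCompact_Icc.exists_bound_of_continuousOn hw_cont
  have hCw0 : 0 ≤ Cw := le_trans (norm_nonneg _) (hCw 0 (left_mem_Icc.2 pi_pos.le))
  have hconst : ∀ c : ℝ, IntegrableOn (fun _ : ℝ => c) (Ioo 0 π) := fun c =>
    integrableOn_const measure_Ioo_lt_top.ne
  have hw'm : AEStronglyMeasurable w' (volume.restrict (Ioo 0 π)) := by
    refine ((measurable_deriv w).aestronglyMeasurable).congr ?_
    refine (ae_restrict_iff' measurableSet_Ioo).2 (ae_of_all _ fun y hy => ?_)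
    exact ((hw y (Ioo_subset_Icc_self hy)).deriv)
  have hwm : AEStronglyMeasurable w (volume.restrict (Ioo 0 π)) :=
    (hw_cont.mono Ioo_subset_Icc_self).aestronglyMeasurable measurableSet_Ioo
  have hv'm : AEStronglyMeasurable v' (volume.restrict (Ioo 0 π)) := by
    rw [hv'_def]
    exact (hw'm.mul continuous_sin.aestronglyMeasurable).add
      (hwm.mul continuous_cos.aestronglyMeasurable)
  -- integrability of v'^2
  have hv'2int : IntegrableOn (fun y => v' y ^ 2) (Ioo 0 π) := by
    refine Integrable.mono' ((hint.const_mul 2).add (hconst (2 * Cw ^ 2))) (hv'm.pow 2) ?_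
    refine (ae_restrict_iff' measurableSet_Ioo).2 (ae_of_all _ fun y hy => ?_)
    have h1 : ‖w y‖ ≤ Cw := hCw y (Ioo_subset_Icc_self hy)
    rw [Real.norm_eq_abs] at h1
    have h2 : w y ^ 2 ≤ Cw ^ 2 := by
      rw [← sq_abs]; exact pow_le_pow_left₀ (abs_nonneg _) h1 2
    have h3 : w y ^ 2 * cos y ^ 2 ≤ Cw ^ 2 := by
      nlinarith [sq_nonneg (w y), cos_sq_le_one y]
    rw [Real.norm_eq_abs, abs_of_nonneg (sq_nonneg _)]
    simp only [Pi.add_apply, hv'_def]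
    nlinarith [sq_nonneg (w' y * sin y - w y * cos y)]
  have hv_cont : ContinuousOn v (Icc 0 π) := fun y hy =>
    ((hv y hy).continuousAt).continuousWithinAt
  have hv2int : IntegrableOn (fun y => v y ^ 2) (Ioo 0 π) := by
    refine Integrable.mono' (hconst (Cw ^ 2))
      (((hv_cont.mono Ioo_subset_Icc_self).pow 2).aestronglyMeasurable measurableSet_Ioo) ?_
    refine (ae_restrict_iff' measurableSet_Ioo).2 (ae_of_all _ fun y hy => ?_)
    have h1 : ‖w y‖ ≤ Cw := hCw y (Ioo_subset_Icc_self hy)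
    rw [Real.norm_eq_abs] at h1
    have h2 : w y ^ 2 ≤ Cw ^ 2 := by
      rw [← sq_abs]; exact pow_le_pow_left₀ (abs_nonneg _) h1 2
    rw [Real.norm_eq_abs, abs_of_nonneg (sq_nonneg _)]
    simp only [hv_def, mul_pow]
    nlinarith [sq_nonneg (w y), sin_sq_le_one y, sq_nonneg (w y * sin y)]
  -- the integration-by-parts identity
  have hIdDeriv : ∀ y ∈ Icc 0 π, HasDerivAt (fun y => w y ^ 2 * (sin y * cos y))
      (v' y ^ 2 - w' y ^ 2 * sin y ^ 2 - v y ^ 2) y := by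
    intro y hy
    have h1 : HasDerivAt (fun y => w y ^ 2) (2 * w y * w' y) y := by
      have := (hw y hy).fun_pow 2
      simpa [mul_comm, mul_assoc, mul_left_comm] using this
    have h2 : HasDerivAt (fun y : ℝ => sin y * cos y) (cos y * cos y + sin y * -sin y) y :=
      (hasDerivAt_sin y).mul (hasDerivAt_cos y)
    have h3 := h1.fun_mul h2
    refine h3.congr_deriv (Eq.symm ?_)
    rw [hv'_def, hv_def]
    ring
  have hEint : IntegrableOn (fun y => v' y ^ 2 - w' y ^ 2 * sin y ^ 2 - v y ^ 2) (Ioo 0 π) :=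
    (hv'2int.sub hint).sub hv2int
  have hFTC := intervalIntegral.integral_eq_sub_of_hasDerivAt
    (f := fun y => w y ^ 2 * (sin y * cos y))
    (f' := fun y => v' y ^ 2 - w' y ^ 2 * sin y ^ 2 - v y ^ 2)
    (by rw [uIcc_of_le pi_pos.le]; exact hIdDeriv)
    ((intervalIntegrable_iff_integrableOn_Ioo_of_le pi_pos.le).2 hEint)
  rw [intervalIntegral.integral_of_le pi_pos.le, integral_Ioc_eq_integral_Ioo] at hFTC
  have hFTC0 : ∫ y in Ioo 0 π, (v' y ^ 2 - w' y ^ 2 * sin y ^ 2 - v y ^ 2) = 0 := by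
    rw [hFTC]; simp [Real.sin_pi]
  have hE1 : IntegrableOn (fun y => v' y ^ 2 - w' y ^ 2 * sin y ^ 2) (Ioo 0 π) :=
    hv'2int.sub hint
  rw [integral_sub hE1 hv2int, integral_sub hv'2int hint] at hFTC0
  -- splitting the interval at y₀
  have hsub1 : Ioo 0 y₀ ⊆ Ioo 0 π := Ioo_subset_Ioo le_rfl hy₀π.le
  have hsub2 : Ioo y₀ π ⊆ Ioo 0 π := Ioo_subset_Ioo hy₀0.le le_rfl
  have hIcc1 : Icc 0 y₀ ⊆ Icc 0 π := Icc_subset_Icc le_rfl hy₀π.le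
  have hIcc2 : Icc y₀ π ⊆ Icc 0 π := Icc_subset_Icc hy₀0.le le_rfl
  have hdisj : Disjoint (Ioo 0 y₀) (Ioo y₀ π) :=
    Set.disjoint_left.2 fun x hx1 hx2 => absurd hx1.2 (not_lt.2 hx2.1.le)
  have hunion : Ioo 0 y₀ ∪ Ioo y₀ π = Ioo 0 π \ {y₀} := by
    ext x
    simp only [mem_union, mem_Ioo, mem_diff, mem_singleton_iff]
    constructor
    · rintro (⟨h1, h2⟩ | ⟨h1, h2⟩)
      · exact ⟨⟨h1, h2.trans hy₀π⟩, h2.ne⟩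
      · exact ⟨⟨hy₀0.trans h1, h2⟩, h1.ne'⟩
    · rintro ⟨⟨h1, h2⟩, h3⟩
      rcases lt_or_gt_of_ne h3 with h | h
      · exact Or.inl ⟨h1, h⟩
      · exact Or.inr ⟨h, h2⟩
  have haeset : (Ioo 0 π \ {y₀} : Set ℝ) =ᵐ[volume] (Ioo 0 π : Set ℝ) :=
    diff_ae_eq_self.2 (measure_mono_null Set.inter_subset_right (measure_singleton y₀))
  have hsplitInt : ∀ g : ℝ → ℝ, IntegrableOn g (Ioo 0 y₀) → IntegrableOn g (Ioo y₀ π) →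
      IntegrableOn g (Ioo 0 π) := by
    intro g h1 h2
    have h3 : IntegrableOn g (Ioo 0 π \ {y₀}) := by rw [← hunion]; exact h1.union h2
    rwa [IntegrableOn, Measure.restrict_congr_set haeset] at h3
  have hsplitEq : ∀ g : ℝ → ℝ, IntegrableOn g (Ioo 0 π) →
      ∫ y in Ioo 0 π, g y = (∫ y in Ioo 0 y₀, g y) + ∫ y in Ioo y₀ π, g y := by
    intro g hg
    rw [← setIntegral_congr_set haeset, ← hunion,
      setIntegral_union hdisj measurableSet_Ioo (hg.mono_set hsub1) (hg.mono_set hsub2)]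
  -- Hardy on the two pieces
  have hardy2 := hardy_left y₀ π hy₀π v v' (fun y hy => hv y (hIcc2 hy)) hvy₀
    (hv'2int.mono_set hsub2)
  have hardy1 := hardy_right 0 y₀ hy₀0 v v' (fun y hy => hv y (hIcc1 hy)) hvy₀
    (hv'2int.mono_set hsub1)
  have hfint : IntegrableOn (fun y => v y ^ 2 / (y - y₀) ^ 2) (Ioo 0 π) :=
    hsplitInt _ hardy1.1 hardy2.1
  have hfeq : (fun y => w y ^ 2 * sin y ^ 2 / (y - y₀) ^ 2)
      = fun y => v y ^ 2 / (y - y₀) ^ 2 := funext fun y => by rw [hv_def]; rw [← mul_pow]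
  -- Poincare on the two pieces
  have hv0 : v 0 = 0 := by rw [hv_def]; simp
  have hvπ : v π = 0 := by rw [hv_def]; simp [Real.sin_pi]
  have hpoin1 := poincare 0 y₀ hy₀0 v v' (fun y hy => hv y (hIcc1 hy)) hv0 hvy₀
    (hv'2int.mono_set hsub1)
  have hpoin2 := poincare y₀ π hy₀π v v' (fun y hy => hv y (hIcc2 hy)) hvy₀ hvπ
    (hv'2int.mono_set hsub2)
  -- arithmetic
  have hpi2 : (0:ℝ) < π ^ 2 := by positivity
  have hMlt : M < π ^ 2 := by
    rw [hM]
    exact max_lt (pow_lt_pow_left₀ hy₀π hy₀0.le two_ne_zero)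
      (pow_lt_pow_left₀ (by linarith) (by linarith) two_ne_zero)
  have hMp : 0 < π ^ 2 - M := by linarith
  have hA1 : 0 ≤ ∫ y in Ioo 0 y₀, v' y ^ 2 :=
    setIntegral_nonneg measurableSet_Ioo fun y _ => sq_nonneg _
  have hA2 : 0 ≤ ∫ y in Ioo y₀ π, v' y ^ 2 :=
    setIntegral_nonneg measurableSet_Ioo fun y _ => sq_nonneg _
  have hc1 : ((y₀ - 0) / π) ^ 2 ≤ M / π ^ 2 := by
    rw [sub_zero, div_pow]
    gcongr
    exact le_max_left _ _
  have hc2 : ((π - y₀) / π) ^ 2 ≤ M / π ^ 2 := by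
    rw [div_pow]
    gcongr
    exact le_max_right _ _
  have hB1 : π ^ 2 * ∫ y in Ioo 0 y₀, v y ^ 2 ≤ M * ∫ y in Ioo 0 y₀, v' y ^ 2 := by
    have h := hpoin1.trans (mul_le_mul_of_nonneg_right hc1 hA1)
    rw [div_mul_eq_mul_div, le_div_iff₀ hpi2] at h
    linarith
  have hB2 : π ^ 2 * ∫ y in Ioo y₀ π, v y ^ 2 ≤ M * ∫ y in Ioo y₀ π, v' y ^ 2 := by
    have h := hpoin2.trans (mul_le_mul_of_nonneg_right hc2 hA2)
    rw [div_mul_eq_mul_div, le_div_iff₀ hpi2] at h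
    linarith
  have hFsplit := hsplitEq _ hfint
  have hAsplit := hsplitEq _ hv'2int
  have hBsplit := hsplitEq _ hv2int
  constructor
  · rw [hfeq]; exact hfint
  · rw [hfeq]
    rw [div_mul_eq_mul_div, le_div_iff₀ hMp]
    have hF4A : ∫ y in Ioo 0 π, v y ^ 2 / (y - y₀) ^ 2
        ≤ 4 * ∫ y in Ioo 0 π, v' y ^ 2 := by
      rw [hFsplit, hAsplit]
      linarith [hardy1.2, hardy2.2]
    have hkey := mul_le_mul_of_nonneg_right hF4A hMp.le
    have hG : 0 ≤ ∫ y in Ioo 0 π, w' y ^ 2 * sin y ^ 2 :=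
      setIntegral_nonneg measurableSet_Ioo fun y _ => mul_nonneg (sq_nonneg _) (sq_nonneg _)
    nlinarith [hFTC0, hB1, hB2, hAsplit, hBsplit, hkey]

/-- Lemma 7.3: weighted one-dimensional Hardy inequality with weight `sin² y`
centered at an interior point `y₀` of `(0, π)`. -/
theorem weighted_hardy_sin_sq (y₀ : ℝ) (hy₀ : y₀ ∈ Set.Ioo 0 π) (u : ℝ → ℂ)
    (hu_diff : ∀ y ∈ Set.Icc 0 π, DifferentiableAt ℝ u y)
    (hu_deriv_L2 : IntegrableOn (fun y => ‖deriv u y‖ ^ 2 * (sin y) ^ 2) (Set.Ioo 0 π))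
    (hu0 : u y₀ = 0) :
    ∫ y in Set.Ioo 0 π, ‖u y‖ ^ 2 * (sin y) ^ 2 / (y - y₀) ^ 2
      ≤ (4 * π ^ 2 / (π ^ 2 - max (y₀ ^ 2) ((π - y₀) ^ 2))) *
        ∫ y in Set.Ioo 0 π, ‖deriv u y‖ ^ 2 * (sin y) ^ 2 := by
  set wre : ℝ → ℝ := fun y => (u y).re with hwre
  set wim : ℝ → ℝ := fun y => (u y).im with hwim
  set dre : ℝ → ℝ := fun y => (deriv u y).re with hdre
  set dim : ℝ → ℝ := fun y => (deriv u y).im with hdim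
  have hder : ∀ y ∈ Icc 0 π, HasDerivAt u (deriv u y) y := fun y hy =>
    (hu_diff y hy).hasDerivAt
  have hdre_d : ∀ y ∈ Icc 0 π, HasDerivAt wre (dre y) y := by
    intro y hy
    exact (Complex.reCLM.hasFDerivAt.comp_hasDerivAt y (hder y hy))
  have hdim_d : ∀ y ∈ Icc 0 π, HasDerivAt wim (dim y) y := by
    intro y hy
    exact (Complex.imCLM.hasFDerivAt.comp_hasDerivAt y (hder y hy))
  -- measurability of deriv u
  have hmeas : AEStronglyMeasurable (deriv u) (volume.restrict (Ioo 0 π)) :=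
    (measurable_deriv u).aestronglyMeasurable
  have hnorm_sq : ∀ z : ℂ, ‖z‖ ^ 2 = z.re ^ 2 + z.im ^ 2 := by
    intro z
    rw [Complex.sq_norm, Complex.normSq_apply]
    ring
  have hint_re : IntegrableOn (fun y => dre y ^ 2 * sin y ^ 2) (Ioo 0 π) := by
    refine Integrable.mono' hu_deriv_L2 ?_ ?_
    · exact ((Complex.measurable_re.comp (measurable_deriv u)).pow_const 2).aestronglyMeasurable.mul
        ((continuous_sin.pow 2).aestronglyMeasurable)
    · refine (ae_restrict_iff' measurableSet_Ioo).2 (ae_of_all _ fun y hy => ?_)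
      rw [Real.norm_eq_abs, abs_of_nonneg (mul_nonneg (sq_nonneg _) (sq_nonneg _))]
      have := hnorm_sq (deriv u y)
      nlinarith [sq_nonneg ((deriv u y).im), sq_nonneg (sin y), sq_nonneg ((deriv u y).re)]
  have hint_im : IntegrableOn (fun y => dim y ^ 2 * sin y ^ 2) (Ioo 0 π) := by
    refine Integrable.mono' hu_deriv_L2 ?_ ?_
    · exact ((Complex.measurable_im.comp (measurable_deriv u)).pow_const 2).aestronglyMeasurable.mul
        ((continuous_sin.pow 2).aestronglyMeasurable)
    · refine (ae_restrict_iff' measurableSet_Ioo).2 (ae_of_all _ fun y hy => ?_)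
      rw [Real.norm_eq_abs, abs_of_nonneg (mul_nonneg (sq_nonneg _) (sq_nonneg _))]
      have := hnorm_sq (deriv u y)
      nlinarith [sq_nonneg ((deriv u y).im), sq_nonneg (sin y), sq_nonneg ((deriv u y).re)]
  have h0re : wre y₀ = 0 := by rw [hwre]; simp [hu0]
  have h0im : wim y₀ = 0 := by rw [hwim]; simp [hu0]
  obtain ⟨hIre, hLre⟩ := real_main y₀ hy₀ wre dre hdre_d hint_re h0re
  obtain ⟨hIim, hLim⟩ := real_main y₀ hy₀ wim dim hdim_d hint_im h0im
  have hLHS : ∫ y in Ioo 0 π, ‖u y‖ ^ 2 * sin y ^ 2 / (y - y₀) ^ 2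
      = (∫ y in Ioo 0 π, wre y ^ 2 * sin y ^ 2 / (y - y₀) ^ 2)
        + ∫ y in Ioo 0 π, wim y ^ 2 * sin y ^ 2 / (y - y₀) ^ 2 := by
    rw [← integral_add hIre hIim]
    refine setIntegral_congr_fun measurableSet_Ioo fun y _ => ?_
    rw [hnorm_sq (u y)]
    ring
  have hRHS : ∫ y in Ioo 0 π, ‖deriv u y‖ ^ 2 * sin y ^ 2
      = (∫ y in Ioo 0 π, dre y ^ 2 * sin y ^ 2)
        + ∫ y in Ioo 0 π, dim y ^ 2 * sin y ^ 2 := by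
    rw [← integral_add hint_re hint_im]
    refine setIntegral_congr_fun measurableSet_Ioo fun y _ => ?_
    rw [hnorm_sq (deriv u y)]
    ring
  rw [hLHS, hRHS, mul_add]
  exact add_le_add hLre hLim
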